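/- Let V ⊆ ℂ be a measurable set with 0 < Area(V) < ∞, let ρ : ℂ → [0,∞) be measurable, let (τ_i)_{i∈I} be a countable family of pairwise disjoint closed disks contained in V, let (ρ_i)_{i∈I} be nonnegative reals, and let δ ≥ 0. If δ ≤ ∫_V ρ dA + ∑_{i∈I} diam(τ_i) · ρ_i, then π δ² / (8 · Area(V)) ≤ ∫_V ρ² dA + ∑_{i∈I} ρ_i². -/

import Mathlib

open Set Metric MeasureTheory

/-- The quantitative transboundary-modulus lower bound: if
`δ ≤ ∫_V ρ dA + ∑ diam(τ_i) ρ_i` for pairwise disjoint closed disks `τ_i ⊆ V`, then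
`π δ² / (8 Area V) ≤ ∫_V ρ² dA + ∑ ρ_i²`. -/
theorem transboundary_energy_lower_bound
    (V : Set ℂ) (hV : MeasurableSet V) (hpos : 0 < volume V) (hfin : volume V < ⊤)
    (ρ : ℂ → ℝ) (hρmeas : Measurable ρ) (hρ0 : ∀ w, 0 ≤ ρ w)
    (I : Type) [Countable I] (τ : I → Set ℂ)
    (hτ : ∀ i, ∃ x t, 0 ≤ t ∧ τ i = closedBall x t)
    (hdisj : Pairwise fun i k => Disjoint (τ i) (τ k))
    (hsub : ∀ i, τ i ⊆ V)
    (ρi : I → ℝ) (hρi : ∀ i, 0 ≤ ρi i)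
    (δ : ℝ) (hδ : 0 ≤ δ)
    (hadm : ENNReal.ofReal δ ≤ (∫⁻ w in V, ENNReal.ofReal (ρ w) ∂volume)
        + ∑' i, ENNReal.ofReal (Metric.diam (τ i) * ρi i)) :
    ENNReal.ofReal (Real.pi * δ ^ 2) / (8 * volume V)
      ≤ (∫⁻ w in V, ENNReal.ofReal (ρ w ^ 2) ∂volume)
        + ∑' i, ENNReal.ofReal (ρi i ^ 2) := by
  classical
  letI : MeasurableSpace I := ⊤
  haveI : MeasurableSingletonClass I := ⟨fun _ => MeasurableSpace.measurableSet_top⟩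
  set A := volume V with hA
  set E1 := ∫⁻ w in V, ENNReal.ofReal (ρ w ^ 2) ∂volume with hE1
  set E2 := ∑' i, ENNReal.ofReal (ρi i ^ 2) with hE2
  by_cases htop : E1 + E2 = ⊤
  · rw [htop]; exact le_top
  have hE1t : E1 ≠ ⊤ := fun h => htop (by simp [h])
  have hE2t : E2 ≠ ⊤ := fun h => htop (by simp [h])
  have hAt : A ≠ ⊤ := hfin.ne
  have hA0 : A ≠ 0 := hpos.ne'
  have hpq : Real.HolderConjugate 2 2 := Real.HolderConjugate.two_two
  have hπ0 : (0:ℝ) < Real.pi := Real.pi_pos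
  -- Hölder for the integral part
  have h1 : (∫⁻ w in V, ENNReal.ofReal (ρ w) ∂volume)
      ≤ E1 ^ (1/2 : ℝ) * A ^ (1/2 : ℝ) := by
    have H := ENNReal.lintegral_mul_le_Lp_mul_Lq (volume.restrict V) hpq
      (f := fun w => ENNReal.ofReal (ρ w)) (g := fun _ => 1)
      hρmeas.ennreal_ofReal.aemeasurable aemeasurable_const
    simp only [Pi.mul_apply, mul_one, ENNReal.rpow_two, one_pow, lintegral_one,
      Measure.restrict_apply_univ] at H
    calc (∫⁻ w in V, ENNReal.ofReal (ρ w) ∂volume)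
        ≤ (∫⁻ w in V, ENNReal.ofReal (ρ w) ^ 2 ∂volume) ^ (1/2:ℝ) * A ^ (1/2:ℝ) := H
      _ = E1 ^ (1/2:ℝ) * A ^ (1/2:ℝ) := by
          congr 1
          rw [hE1]
          congr 1
          refine lintegral_congr fun w => ?_
          rw [← ENNReal.ofReal_pow (hρ0 w)]
  -- Hölder for the sum part
  set S := ∑' i, ENNReal.ofReal (Metric.diam (τ i) ^ 2) with hS
  have h2 : (∑' i, ENNReal.ofReal (Metric.diam (τ i) * ρi i))
      ≤ S ^ (1/2 : ℝ) * E2 ^ (1/2 : ℝ) := by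
    have H := ENNReal.lintegral_mul_le_Lp_mul_Lq (Measure.count : Measure I) hpq
      (f := fun i => ENNReal.ofReal (Metric.diam (τ i)))
      (g := fun i => ENNReal.ofReal (ρi i))
      (measurable_of_countable _).aemeasurable (measurable_of_countable _).aemeasurable
    simp only [Pi.mul_apply, lintegral_count, ENNReal.rpow_two] at H
    calc (∑' i, ENNReal.ofReal (Metric.diam (τ i) * ρi i))
        = ∑' i, ENNReal.ofReal (Metric.diam (τ i)) * ENNReal.ofReal (ρi i) := by
          refine tsum_congr fun i => ?_
          rw [ENNReal.ofReal_mul Metric.diam_nonneg]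
      _ ≤ (∑' i, ENNReal.ofReal (Metric.diam (τ i)) ^ 2) ^ (1/2:ℝ)
            * (∑' i, ENNReal.ofReal (ρi i) ^ 2) ^ (1/2:ℝ) := H
      _ = S ^ (1/2:ℝ) * E2 ^ (1/2:ℝ) := by
          rw [hS, hE2]
          congr 2
          · exact tsum_congr fun i => by rw [← ENNReal.ofReal_pow Metric.diam_nonneg]
          · exact tsum_congr fun i => by rw [← ENNReal.ofReal_pow (hρi i)]
  -- area bound for the disks
  have hSle : ENNReal.ofReal Real.pi * S ≤ 4 * A := by
    have key : ∀ i, ENNReal.ofReal Real.pi * ENNReal.ofReal (Metric.diam (τ i) ^ 2)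
        ≤ 4 * volume (τ i) := by
      intro i
      obtain ⟨x, t, ht, hτi⟩ := hτ i
      have hπeq : ENNReal.ofReal Real.pi = (NNReal.pi : ENNReal) := by
        rw [← NNReal.coe_real_pi, ENNReal.ofReal_coe_nnreal]
      have hd : Metric.diam (τ i) ^ 2 ≤ 4 * t ^ 2 := by
        have h2 := Metric.diam_closedBall (x := x) ht
        rw [← hτi] at h2
        nlinarith [Metric.diam_nonneg (s := τ i)]
      calc ENNReal.ofReal Real.pi * ENNReal.ofReal (Metric.diam (τ i) ^ 2)
          ≤ ENNReal.ofReal Real.pi * ENNReal.ofReal (4 * t ^ 2) :=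
            mul_le_mul' le_rfl (ENNReal.ofReal_le_ofReal hd)
        _ = 4 * volume (τ i) := by
            rw [hτi, Complex.volume_closedBall, ENNReal.ofReal_mul (by norm_num),
              ENNReal.ofReal_ofNat, ENNReal.ofReal_pow ht, hπeq]
            ring
    have hmeas : ∀ i, MeasurableSet (τ i) := by
      intro i; obtain ⟨x, t, _, hτi⟩ := hτ i
      rw [hτi]; exact measurableSet_closedBall
    calc ENNReal.ofReal Real.pi * S
        = ∑' i, ENNReal.ofReal Real.pi * ENNReal.ofReal (Metric.diam (τ i) ^ 2) := by
          rw [hS, ENNReal.tsum_mul_left]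
      _ ≤ ∑' i, 4 * volume (τ i) := ENNReal.tsum_le_tsum key
      _ = 4 * volume (⋃ i, τ i) := by rw [measure_iUnion hdisj hmeas, ENNReal.tsum_mul_left]
      _ ≤ 4 * A := by
          gcongr
          exact measure_mono (iUnion_subset hsub)
  have hSt : S ≠ ⊤ := by
    intro h
    rw [h, ENNReal.mul_top (by simpa using hπ0)] at hSle
    exact absurd (top_le_iff.mp hSle) (by finiteness)
  -- pass to real numbers
  set a := A.toReal with ha
  set e1 := E1.toReal with he1
  set e2 := E2.toReal with he2
  set s := S.toReal with hs
  have ha0 : 0 < a := ENNReal.toReal_pos hA0 hAt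
  have he1n : 0 ≤ e1 := ENNReal.toReal_nonneg
  have he2n : 0 ≤ e2 := ENNReal.toReal_nonneg
  have hsn : 0 ≤ s := ENNReal.toReal_nonneg
  have hXt : E1 ^ (1/2:ℝ) * A ^ (1/2:ℝ) + S ^ (1/2:ℝ) * E2 ^ (1/2:ℝ) ≠ ⊤ := by
    refine ENNReal.add_ne_top.mpr ⟨ENNReal.mul_ne_top ?_ ?_, ENNReal.mul_ne_top ?_ ?_⟩ <;>
      exact ENNReal.rpow_ne_top_of_nonneg (by norm_num) (by assumption)
  have hδle : δ ≤ e1 ^ (1/2:ℝ) * a ^ (1/2:ℝ) + s ^ (1/2:ℝ) * e2 ^ (1/2:ℝ) := by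
    have hmt1 : E1 ^ (1/2:ℝ) * A ^ (1/2:ℝ) ≠ ⊤ :=
      ENNReal.mul_ne_top (ENNReal.rpow_ne_top_of_nonneg (by norm_num) hE1t)
        (ENNReal.rpow_ne_top_of_nonneg (by norm_num) hAt)
    have hmt2 : S ^ (1/2:ℝ) * E2 ^ (1/2:ℝ) ≠ ⊤ :=
      ENNReal.mul_ne_top (ENNReal.rpow_ne_top_of_nonneg (by norm_num) hSt)
        (ENNReal.rpow_ne_top_of_nonneg (by norm_num) hE2t)
    have H := ENNReal.toReal_mono hXt (hadm.trans (add_le_add h1 h2))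
    rw [ENNReal.toReal_ofReal hδ, ENNReal.toReal_add hmt1 hmt2, ENNReal.toReal_mul,
      ENNReal.toReal_mul, ← ENNReal.toReal_rpow, ← ENNReal.toReal_rpow,
      ← ENNReal.toReal_rpow, ← ENNReal.toReal_rpow] at H
    exact H
  have hsle : Real.pi * s ≤ 4 * a := by
    have := ENNReal.toReal_mono (by finiteness) hSle
    rwa [ENNReal.toReal_mul, ENNReal.toReal_ofReal hπ0.le, ENNReal.toReal_mul,
      ENNReal.toReal_ofNat] at this
  -- real arithmetic
  have hkey : Real.pi * δ ^ 2 ≤ (e1 + e2) * (8 * a) := by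
    rw [← Real.sqrt_eq_rpow, ← Real.sqrt_eq_rpow, ← Real.sqrt_eq_rpow,
      ← Real.sqrt_eq_rpow] at hδle
    set u := Real.sqrt e1 with hud
    set v := Real.sqrt a with hvd
    set w := Real.sqrt s with hwd
    set z := Real.sqrt e2 with hzd
    have hu : u ^ 2 = e1 := Real.sq_sqrt he1n
    have hv : v ^ 2 = a := Real.sq_sqrt ha0.le
    have hw : w ^ 2 = s := Real.sq_sqrt hsn
    have hz : z ^ 2 = e2 := Real.sq_sqrt he2n
    have hun : 0 ≤ u := Real.sqrt_nonneg _
    have hvn : 0 ≤ v := Real.sqrt_nonneg _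
    have hwn : 0 ≤ w := Real.sqrt_nonneg _
    have hzn : 0 ≤ z := Real.sqrt_nonneg _
    have hπ4 : Real.pi ≤ 4 := Real.pi_le_four
    have hsle' : Real.pi * w ^ 2 ≤ 4 * v ^ 2 := by rw [hw, hv]; exact hsle
    have hδ2 : δ ^ 2 ≤ (u * v + w * z) ^ 2 :=
      pow_le_pow_left₀ hδ hδle 2
    have main : Real.pi * (u * v + w * z) ^ 2 ≤ 8 * v ^ 2 * (u ^ 2 + z ^ 2) := by
      nlinarith [mul_nonneg hπ0.le (sq_nonneg (u * v - w * z)),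
        mul_le_mul_of_nonneg_right hπ4 (mul_nonneg (sq_nonneg u) (sq_nonneg v)),
        mul_le_mul_of_nonneg_right hsle' (sq_nonneg z),
        mul_nonneg (mul_nonneg hun hvn) (mul_nonneg hwn hzn), hπ0.le]
    have := (mul_le_mul_of_nonneg_left hδ2 hπ0.le).trans main
    nlinarith [this, hu, hv, hz]
  -- back to ENNReal
  rw [ENNReal.div_le_iff (by simpa using hA0) (by finiteness)]
  calc ENNReal.ofReal (Real.pi * δ ^ 2)
      ≤ ENNReal.ofReal ((e1 + e2) * (8 * a)) := ENNReal.ofReal_le_ofReal hkey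
    _ = (E1 + E2) * (8 * A) := by
        rw [ENNReal.ofReal_mul (by positivity), ENNReal.ofReal_mul (by norm_num),
          ENNReal.ofReal_add he1n he2n, ENNReal.ofReal_toReal hE1t,
          ENNReal.ofReal_toReal hE2t, ENNReal.ofReal_ofNat, ENNReal.ofReal_toReal hAt]
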